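/- Let a, b, c be real numbers. For every n ∈ ℕ, every entry of the polynomial matrix Qₙ has degree at most n, the matrix formed by the coefficients of xⁿ of the entries of Qₙ equals Aₙ = [[1, abn, 0],[0, a²e^{-b²}n/2 + 1 + c²n/2, 0],[0,0,1]], and Aₙ is an invertible matrix. -/
import Mathlib


open Matrix Polynomial

/-- The monic Hermite polynomials for the weight e^{-x²}:
h₀ = 1, h_{n+1}(x) = x·hₙ(x) - (1/2)·hₙ'(x). -/
noncomputable def h : ℕ → Polynomial ℝ
  | 0 => 1
  | n + 1 => X * h n - C (1 / 2 : ℝ) * derivative (h n)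

/-- The sequence Qₙ of matrix orthogonal polynomials for W. -/
noncomputable def Qmat (a b c : ℝ) (n : ℕ) : Matrix (Fin 3) (Fin 3) (Polynomial ℝ) :=
  !![(h n).comp (X - C b),
     C a * (h (n + 1) - (h n).comp (X - C b) * X),
     0;
     -(C (a * Real.exp (-b ^ 2) * n / 2)) * (h (n - 1)).comp (X - C b),
     C (a ^ 2 * Real.exp (-b ^ 2) * n / 2) * (h (n - 1)).comp (X - C b) * X
       + h n + C (c ^ 2 * n / 2) * h (n - 1) * X,
     -(C (c * n / 2)) * h (n - 1);
     0,
     C c * (h (n + 1) - h n * X),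
     h n]

/-- The leading coefficient Aₙ of Qₙ. -/
noncomputable def Amat (a b c : ℝ) (n : ℕ) : Matrix (Fin 3) (Fin 3) ℝ :=
  !![1, a * b * n, 0;
     0, a ^ 2 * Real.exp (-b ^ 2) * n / 2 + 1 + c ^ 2 * n / 2, 0;
     0, 0, 1]

lemma h_comp_rec (b : ℝ) (n : ℕ) :
    (h (n+1)).comp (X - C b) =
      (X - C b) * (h n).comp (X - C b) - C (1/2:ℝ) * derivative ((h n).comp (X - C b)) := by
  rw [show h (n+1) = X * h n - C (1/2:ℝ) * derivative (h n) from rfl]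
  simp [sub_comp, mul_comp, X_comp, C_comp, derivative_comp]

lemma h_comp_monic (b : ℝ) (n : ℕ) :
    ((h n).comp (X - C b)).Monic ∧ ((h n).comp (X - C b)).natDegree = n := by
  induction n with
  | zero => exact ⟨by simpa [h] using monic_one, by simp [h]⟩
  | succ n ih =>
    obtain ⟨hm, hd⟩ := ih
    set g := (h n).comp (X - C b) with hg
    have hXg : ((X - C b) * g).Monic := (monic_X_sub_C b).mul hm
    have hXgd : ((X - C b) * g).natDegree = n + 1 := by
      rw [natDegree_mul (monic_X_sub_C b).ne_zero hm.ne_zero, natDegree_X_sub_C, hd]; omega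
    have hdlt : (C (1/2:ℝ) * derivative g).degree < ((X - C b) * g).degree := by
      rw [degree_eq_natDegree hXg.ne_zero, hXgd]
      refine lt_of_le_of_lt degree_le_natDegree (Nat.cast_lt.mpr ?_)
      have := (natDegree_C_mul_le (1/2:ℝ) (derivative g)).trans (hd ▸ natDegree_derivative_le g)
      omega
    rw [h_comp_rec]
    constructor
    · exact hXg.sub_of_left hdlt
    · rw [← hg, natDegree_sub_eq_left_of_natDegree_lt (by rw [hXgd]; have := (natDegree_C_mul_le (1/2:ℝ) (derivative g)).trans (hd ▸ natDegree_derivative_le g); omega), hXgd]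

lemma h_comp_coeff (b : ℝ) (n : ℕ) :
    ((h (n+1)).comp (X - C b)).coeff n = -((n+1 : ℕ) : ℝ) * b := by
  induction n with
  | zero =>
    have : h 1 = X := by simp [h]
    simp [this]
  | succ n ih =>
    obtain ⟨hm, hd⟩ := h_comp_monic b (n+1)
    rw [h_comp_rec]
    set g := (h (n+1)).comp (X - C b) with hg
    have h1 : ((X - C b) * g).coeff (n+1) = g.coeff n - b * g.coeff (n+1) := by
      rw [sub_mul, coeff_sub, coeff_X_mul, coeff_C_mul]
    have h2 : g.coeff (n+1) = 1 := by
      have := hm.coeff_natDegree; rwa [hd] at this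
    have h3 : (derivative g).coeff (n+1) = 0 := by
      rw [coeff_derivative, coeff_eq_zero_of_natDegree_lt (by omega : g.natDegree < n + 2)]
      ring
    rw [coeff_sub, h1, h2, ih, coeff_C_mul, h3]
    push_cast; ring

lemma deg_le_of_lt_succ {r : Polynomial ℝ} {n : ℕ} (H : r.degree < ((n+1 : ℕ) : WithBot ℕ)) :
    r.degree ≤ (n : ℕ) := by
  rcases eq_or_ne r 0 with rfl | hr
  · simp
  · rw [degree_eq_natDegree hr] at H ⊢
    exact_mod_cast Nat.lt_succ_iff.mp (by exact_mod_cast H)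

lemma h_monic (n : ℕ) : (h n).Monic ∧ (h n).natDegree = n := by
  have := h_comp_monic 0 n; simpa using this

lemma h_coeff_succ (n : ℕ) : (h (n+1)).coeff n = 0 := by
  have := h_comp_coeff 0 n; simpa using this

lemma key (k b : ℝ) (n : ℕ) :
    (C k * (h (n+1) - (h n).comp (X - C b) * X)).degree ≤ (n : WithBot ℕ) ∧
    (C k * (h (n+1) - (h n).comp (X - C b) * X)).coeff n = k * (b * n) := by
  rcases n with _ | m
  · have h1 : h 1 = X := by simp [h]
    simp [h1, h]
  · obtain ⟨hm, hd⟩ := h_comp_monic b (m+1)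
    set g := (h (m+1)).comp (X - C b) with hg
    have hgX : (g * X).Monic := hm.mul monic_X
    have hgXd : (g * X).natDegree = m + 2 := by
      rw [natDegree_mul hm.ne_zero X_ne_zero, hd, natDegree_X]
    have hhm := (h_monic (m+2)).1
    have hhd := (h_monic (m+2)).2
    have hlt : (h (m+2) - g * X).degree < ((m+2 : ℕ) : WithBot ℕ) := by
      have := degree_sub_lt (p := h (m+2)) (q := g * X)
        (by rw [degree_eq_natDegree hhm.ne_zero, degree_eq_natDegree hgX.ne_zero, hhd, hgXd])
        hhm.ne_zero (by rw [hhm.leadingCoeff, hgX.leadingCoeff])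
      rwa [degree_eq_natDegree hhm.ne_zero, hhd] at this
    have hdle : (h (m+2) - g * X).natDegree ≤ m + 1 :=
      natDegree_le_iff_degree_le.mpr (deg_le_of_lt_succ hlt)
    constructor
    · exact degree_le_natDegree.trans
        (Nat.cast_le.mpr ((natDegree_C_mul_le _ _).trans hdle))
    · rw [coeff_C_mul, coeff_sub, h_coeff_succ, coeff_mul_X, h_comp_coeff]
      push_cast; ring

lemma comp_deg (b : ℝ) (n : ℕ) : ((h n).comp (X - C b)).degree ≤ (n : WithBot ℕ) :=
  degree_le_natDegree.trans (by rw [(h_comp_monic b n).2])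

lemma comp_coeff_self (b : ℝ) (n : ℕ) : ((h n).comp (X - C b)).coeff n = 1 := by
  have := (h_comp_monic b n).1.coeff_natDegree
  rwa [(h_comp_monic b n).2] at this

lemma small_deg (k b : ℝ) (n : ℕ) :
    (-(C k) * (h (n - 1)).comp (X - C b)).degree ≤ (n : WithBot ℕ) := by
  rw [neg_mul, degree_neg]
  refine degree_le_natDegree.trans (Nat.cast_le.mpr ?_)
  refine (natDegree_C_mul_le _ _).trans ?_
  rw [(h_comp_monic b (n-1)).2]; omega

lemma small_coeff (k b : ℝ) (n : ℕ) (hk : n = 0 → k = 0) :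
    (-(C k) * (h (n - 1)).comp (X - C b)).coeff n = 0 := by
  rcases n with _ | m
  · simp [hk rfl]
  · simp only [Nat.add_sub_cancel]
    rw [neg_mul, coeff_neg, coeff_C_mul,
      coeff_eq_zero_of_natDegree_lt (by rw [(h_comp_monic b m).2]; omega), mul_zero, neg_zero]

lemma mid_deg_term (k b : ℝ) (m : ℕ) :
    (C k * (h m).comp (X - C b) * X).degree ≤ ((m + 1 : ℕ) : WithBot ℕ) := by
  refine degree_le_natDegree.trans (Nat.cast_le.mpr ?_)
  refine (natDegree_mul_le).trans ?_
  have := (natDegree_C_mul_le k ((h m).comp (X - C b))).trans (le_of_eq (h_comp_monic b m).2)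
  simpa [natDegree_X] using this

lemma mid_coeff_term (k b : ℝ) (m : ℕ) :
    (C k * (h m).comp (X - C b) * X).coeff (m + 1) = k := by
  rw [coeff_mul_X, coeff_C_mul, comp_coeff_self, mul_one]

lemma hX (p : Polynomial ℝ) : p.comp (X - C (0:ℝ)) = p := by simp


/-- every entry of Qₙ has degree at most n, its matrix of n-th
coefficients equals Aₙ, and Aₙ is invertible. -/
theorem Q_leading_coefficient (a b c : ℝ) (n : ℕ) :
    (∀ i j, (Qmat a b c n i j).degree ≤ (n : ℕ)) ∧
    (Matrix.of fun i j => (Qmat a b c n i j).coeff n) = Amat a b c n ∧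
    IsUnit (Amat a b c n) := by
  have d11 : (C (a ^ 2 * Real.exp (-b ^ 2) * n / 2) * (h (n - 1)).comp (X - C b) * X
       + h n + C (c ^ 2 * n / 2) * h (n - 1) * X).degree ≤ (n : WithBot ℕ) := by
    rcases n with _ | m
    · simp [h]
    · simp only [Nat.add_sub_cancel]
      refine (degree_add_le _ _).trans (max_le ((degree_add_le _ _).trans (max_le ?_ ?_)) ?_)
      · exact mid_deg_term _ b m
      · exact degree_le_natDegree.trans (Nat.cast_le.mpr (le_of_eq (h_monic (m+1)).2))
      · have := mid_deg_term (c ^ 2 * ((m+1 : ℕ) : ℝ) / 2) 0 m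
        rwa [hX] at this
  have c11 : (C (a ^ 2 * Real.exp (-b ^ 2) * n / 2) * (h (n - 1)).comp (X - C b) * X
       + h n + C (c ^ 2 * n / 2) * h (n - 1) * X).coeff n
       = a ^ 2 * Real.exp (-b ^ 2) * n / 2 + 1 + c ^ 2 * n / 2 := by
    rcases n with _ | m
    · simp [h]
    · simp only [Nat.add_sub_cancel]
      have t3 := mid_coeff_term (c ^ 2 * ((m+1 : ℕ) : ℝ) / 2) 0 m
      rw [hX] at t3
      rw [coeff_add, coeff_add, mid_coeff_term, t3]
      have hc := (h_monic (m+1)).1.coeff_natDegree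
      rw [(h_monic (m+1)).2] at hc
      rw [hc]
  have c21 := (key c 0 n).2
  rw [hX] at c21
  have c21' : (C c * (h (n + 1) - h n * X)).coeff n = 0 := by rw [c21]; ring
  have d21 := (key c 0 n).1
  rw [hX] at d21
  have d12 : (-(C (c * n / 2)) * h (n - 1)).degree ≤ (n : WithBot ℕ) := by
    have := small_deg (c * n / 2) 0 n; rwa [hX] at this
  have c12 : (-(C (c * n / 2)) * h (n - 1)).coeff n = 0 := by
    have := small_coeff (c * n / 2) 0 n (by intro hn; simp [hn]); rwa [hX] at this
  have d22 : (h n).degree ≤ (n : WithBot ℕ) := by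
    have := comp_deg 0 n; rwa [hX] at this
  have c22 : (h n).coeff n = 1 := by
    have := comp_coeff_self 0 n; rwa [hX] at this
  have hD : (0:ℝ) < a ^ 2 * Real.exp (-b ^ 2) * n / 2 + 1 + c ^ 2 * n / 2 := by positivity
  refine ⟨?_, ?_, ?_⟩
  · intro i j
    fin_cases i <;> fin_cases j <;>
      simp only [Qmat, Matrix.cons_val', Matrix.cons_val_zero, Matrix.cons_val_one,
        Matrix.head_cons, Matrix.empty_val', Matrix.cons_val_fin_one, Matrix.head_fin_const,
        Matrix.cons_val_two, Matrix.tail_cons, Matrix.of_apply]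
    · exact comp_deg b n
    · exact (key a b n).1
    · simp
    · exact small_deg _ b n
    · exact d11
    · exact d12
    · simp
    · exact d21
    · exact d22
  · ext i j
    fin_cases i <;> fin_cases j <;>
      simp only [Fin.isValue, Qmat, Amat, Matrix.of_apply, Matrix.cons_val', Matrix.cons_val_zero,
        Matrix.cons_val_one, Matrix.cons_val_two, Matrix.tail_cons, Matrix.head_cons,
        Matrix.empty_val', Matrix.cons_val_fin_one]
    · exact comp_coeff_self b n
    · have c01 : (C a * (h (n + 1) - (h n).comp (X - C b) * X)).coeff n = a * b * (n : ℝ) := by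
        rw [(key a b n).2]; ring
      exact c01
    · simp
    · exact small_coeff _ b n (by intro hn; simp [hn])
    · exact c11
    · exact c12
    · exact rfl
    · exact c21'
    · exact c22
  · rw [Matrix.isUnit_iff_isUnit_det]
    have : (Amat a b c n).det = a ^ 2 * Real.exp (-b ^ 2) * n / 2 + 1 + c ^ 2 * n / 2 := by
      simp [Amat, Matrix.det_fin_three]
    rw [this]
    exact isUnit_iff_ne_zero.mpr (ne_of_gt hD)
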